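/- Let n, μ, q, m be natural numbers with q ≥ 1, μ ≥ 1, and n ≥ q + μ. Then, over the real numbers, (∏_{k=0}^{q−1} (n−μ−k)/(n−k))^m ≥ exp(−q·μ·m/(n−q+1−μ)). -/

import Mathlib

/-- For `q ≥ 1`, `μ ≥ 1` and `n ≥ q + μ`,
`(∏_{k=0}^{q-1} (n-μ-k)/(n-k))^m ≥ exp(-q·μ·m/(n-q+1-μ))`. -/
theorem stmt_12 (n μ q m : ℕ) (hq : 1 ≤ q) (hμ : 1 ≤ μ) (hn : q + μ ≤ n) :
    Real.exp (-((q : ℝ) * μ * m / ((n : ℝ) - q + 1 - μ)))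
      ≤ (∏ k ∈ Finset.range q, ((n : ℝ) - μ - k) / ((n : ℝ) - k)) ^ m := by
  have hq' : (1:ℝ) ≤ q := by exact_mod_cast hq
  have hμ' : (1:ℝ) ≤ μ := by exact_mod_cast hμ
  have hn' : (q:ℝ) + μ ≤ n := by exact_mod_cast hn
  set a : ℝ := (n:ℝ) - q + 1 - μ with ha
  set b : ℝ := (n:ℝ) - q + 1 with hb
  have hapos : 0 < a := by rw [ha]; linarith
  have hbpos : 0 < b := by rw [hb]; linarith
  have hab : 0 ≤ a / b := le_of_lt (div_pos hapos hbpos)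
  -- step 1: exp (-(μ/a)) ≤ a/b
  have h1 : Real.exp (-((μ:ℝ)/a)) ≤ a / b := by
    have h2 : b / a ≤ Real.exp ((μ:ℝ)/a) := by
      have h3 : b / a = (μ:ℝ)/a + 1 := by rw [div_add_one hapos.ne']; congr 1; rw [ha]; ring
      linarith [Real.add_one_le_exp ((μ:ℝ)/a)]
    rw [Real.exp_neg]
    rw [inv_le_comm₀ (Real.exp_pos _) (div_pos hapos hbpos)]
    calc (a/b)⁻¹ = b/a := by rw [inv_div]
    _ ≤ _ := h2
  -- step 2: (a/b)^q ≤ product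
  have hprod : (a/b)^q ≤ ∏ k ∈ Finset.range q, ((n : ℝ) - μ - k) / ((n : ℝ) - k) := by
    calc (a/b)^q = ∏ _k ∈ Finset.range q, a/b := by
            rw [Finset.prod_const, Finset.card_range]
    _ ≤ _ := by
          apply Finset.prod_le_prod
          · intro k _; exact hab
          · intro k hk
            have hk' : (k:ℝ) ≤ (q:ℝ) - 1 := by
              have := Finset.mem_range.mp hk
              have : (k:ℝ) + 1 ≤ q := by exact_mod_cast this
              linarith
            have hnk : 0 < (n:ℝ) - k := by linarith
            rw [div_le_div_iff₀ hbpos hnk]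
            rw [ha, hb]
            nlinarith
  -- combine
  have key : Real.exp (-((q : ℝ) * μ * m / a)) = (Real.exp (-((μ:ℝ)/a)))^(q*m) := by
    rw [← Real.exp_nat_mul]
    congr 1
    push_cast
    ring
  rw [key]
  calc (Real.exp (-((μ:ℝ)/a)))^(q*m) ≤ (a/b)^(q*m) := by
        apply pow_le_pow_left₀ (le_of_lt (Real.exp_pos _)) h1
  _ = ((a/b)^q)^m := by rw [pow_mul]
  _ ≤ _ := by
        apply pow_le_pow_left₀ (pow_nonneg hab q) hprod
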